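/- Let F₀ = { f ∈ L²(0,1) : |f| < 1 a.e. } and define Ĵ(f) = ‖f - id‖²_{L²(0,1)} - (3/4)·⟨f - id, f + id⟩²_{L²(0,1)}, where id(y) = y. Then Ĵ(f) > 0 for all f ∈ F₀ with f ≠ id (as elements of L²). -/

import Mathlib

open MeasureTheory

/-- If a function is a.e. strictly positive on a measure of positive total mass,
its integral is strictly positive. -/
lemma aux_integral_pos {ν : Measure ℝ} [IsFiniteMeasure ν] (hν : ν Set.univ ≠ 0)
    (g : ℝ → ℝ) (hg : Integrable g ν) (h : ∀ᵐ y ∂ν, 0 < g y) :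
    0 < ∫ y, g y ∂ν := by
  rw [integral_pos_iff_support_of_nonneg_ae (h.mono fun _ hy => hy.le) hg]
  have hnull : ν {y | ¬ 0 < g y} = 0 := by
    simpa [ae_iff] using h
  have hcompl : ν (Function.support g)ᶜ = 0 := by
    refine measure_mono_null ?_ hnull
    intro y hy
    simp only [Function.mem_support, not_not, Set.mem_compl_iff] at hy ⊢
    simp [hy]
  have := measure_univ_le_add_compl (μ := ν) (Function.support g)
  rw [hcompl, add_zero] at this
  have h0 : 0 < ν Set.univ := by
    exact lt_of_le_of_ne (zero_le) (Ne.symm hν)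
  exact lt_of_lt_of_le h0 this

theorem stmt_4 (f : ℝ → ℝ)
    (hf : MemLp f 2 (volume.restrict (Set.Ioo (0 : ℝ) 1)))
    (hbd : ∀ᵐ y ∂(volume.restrict (Set.Ioo (0 : ℝ) 1)), |f y| < 1)
    (hne : ¬ f =ᵐ[volume.restrict (Set.Ioo (0 : ℝ) 1)] fun y => y) :
    0 < (∫ y in Set.Ioo (0 : ℝ) 1, (f y - y) ^ 2) -
      3 / 4 * (∫ y in Set.Ioo (0 : ℝ) 1, (f y - y) * (f y + y)) ^ 2 := by
  have hfm : AEStronglyMeasurable f (volume.restrict (Set.Ioo (0 : ℝ) 1)) :=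
    hf.aestronglyMeasurable
  set μ := volume.restrict (Set.Ioo (0 : ℝ) 1) with hμdef
  haveI hfinμ : IsFiniteMeasure μ := by
    constructor
    rw [hμdef, Measure.restrict_apply_univ, Real.volume_Ioo]
    norm_num
  have hμuniv : μ Set.univ = 1 := by
    rw [hμdef, Measure.restrict_apply_univ, Real.volume_Ioo]
    norm_num
  have hmem : ∀ᵐ y ∂μ, y ∈ Set.Ioo (0 : ℝ) 1 := ae_restrict_mem measurableSet_Ioo
  -- measurability
  have hidm : AEStronglyMeasurable (fun y : ℝ => y) μ := aestronglyMeasurable_id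
  have hgm : AEStronglyMeasurable (fun y : ℝ => f y - y) μ := hfm.sub hidm
  have hm1 : AEStronglyMeasurable (fun y => (f y - y) ^ 2) μ := by
    refine (hgm.mul hgm).congr ?_
    filter_upwards with y
    show (f y - y) * (f y - y) = (f y - y) ^ 2
    ring
  have hm2 : AEStronglyMeasurable (fun y => (f y - y) * (f y + y)) μ := by
    exact (hfm.sub hidm).mul (hfm.add hidm)
  -- integrability
  have hiA : Integrable (fun y => (f y - y) ^ 2) μ := by
    refine (integrable_const (4 : ℝ)).mono' hm1 ?_
    filter_upwards [hbd, hmem] with y hy hym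
    obtain ⟨h1, h2⟩ := abs_lt.mp hy
    rw [Real.norm_eq_abs, abs_of_nonneg (by positivity)]
    nlinarith [hym.1, hym.2]
  have hiB : Integrable (fun y => (f y - y) * (f y + y)) μ := by
    refine (integrable_const (4 : ℝ)).mono' hm2 ?_
    filter_upwards [hbd, hmem] with y hy hym
    obtain ⟨h1, h2⟩ := abs_lt.mp hy
    rw [Real.norm_eq_abs, abs_mul]
    have e1 : |f y - y| ≤ 2 := abs_le.mpr ⟨by linarith [hym.2], by linarith [hym.1]⟩
    have e2 : |f y + y| ≤ 2 := abs_le.mpr ⟨by linarith [hym.1], by linarith [hym.2]⟩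
    calc |f y - y| * |f y + y| ≤ 2 * 2 := by
          exact mul_le_mul e1 e2 (abs_nonneg _) (by norm_num)
      _ = 4 := by norm_num
  have hisq : Integrable (fun y : ℝ => y ^ 2) μ := by
    refine (integrable_const (1 : ℝ)).mono'
      ((measurable_id.pow_const 2).aestronglyMeasurable) ?_
    filter_upwards [hmem] with y hym
    rw [Real.norm_eq_abs, abs_of_nonneg (by positivity)]
    nlinarith [hym.1, hym.2]
  set A := ∫ y, (f y - y) ^ 2 ∂μ with hAdef
  set B := ∫ y, (f y - y) * (f y + y) ∂μ with hBdef
  clear_value A B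
  -- ∫ y^2 over Ioo 0 1 is 1/3
  have hsq13 : ∫ y, y ^ 2 ∂μ = 1 / 3 := by
    rw [hμdef, ← integral_Ioc_eq_integral_Ioo,
      ← intervalIntegral.integral_of_le (by norm_num : (0:ℝ) ≤ 1)]
    rw [integral_pow]
    norm_num
  -- B < 2/3
  have hB23 : B < 2 / 3 := by
    have hpos : 0 < ∫ y, (1 - (f y) ^ 2) ∂μ := by
      refine aux_integral_pos (by rw [hμuniv]; norm_num) (fun y => 1 - (f y) ^ 2) ?_ ?_
      · refine (integrable_const (1 : ℝ)).mono'
          (((aestronglyMeasurable_const (b := (1:ℝ))).sub (hfm.mul hfm)).congr ?_) ?_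
        · filter_upwards with y
          show (1 : ℝ) - f y * f y = 1 - (f y) ^ 2
          ring
        filter_upwards [hbd] with y hy
        obtain ⟨h1, h2⟩ := abs_lt.mp hy
        rw [Real.norm_eq_abs, abs_le]
        constructor <;> nlinarith
      · filter_upwards [hbd] with y hy
        obtain ⟨h1, h2⟩ := abs_lt.mp hy
        nlinarith
    have heq : ∫ y, (1 - (f y) ^ 2) ∂μ
        = ∫ y, ((1 - y ^ 2) - (f y - y) * (f y + y)) ∂μ := by
      refine integral_congr_ae ?_
      filter_upwards with y
      ring
    have hi1sq : Integrable (fun y : ℝ => 1 - y ^ 2) μ := by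
      exact (integrable_const (1 : ℝ)).sub hisq
    have hsub : ∫ y, ((1 - y ^ 2) - (f y - y) * (f y + y)) ∂μ
        = (∫ y, (1 - y ^ 2) ∂μ) - B := by
      rw [hBdef, integral_sub hi1sq hiB]
    have h12 : ∫ y, ((1 : ℝ) - y ^ 2) ∂μ = 2 / 3 := by
      rw [integral_sub (integrable_const (1:ℝ)) hisq, hsq13, integral_const, measureReal_def, hμuniv]
      norm_num
    rw [heq, hsub, h12] at hpos
    linarith
  -- the goal
  have hgoal : 3 / 4 * B ^ 2 < A → 0 < A - 3 / 4 * B ^ 2 := fun h => by linarith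
  refine hgoal ?_
  rcases lt_trichotomy B 0 with hBneg | hBzero | hBpos
  · -- case B < 0 : unconstrained quadratic bound
    set l := 3 * B / 2 with hldef
    have hl0 : l < 0 := by rw [hldef]; linarith
    set d := 1 - l with hddef
    clear_value l d
    have hd1 : 1 < d := by rw [hddef]; linarith
    have hd0 : 0 < d := by linarith
    have hmono : ∫ y, (-(l ^ 2 / d) * y ^ 2) ∂μ
        ≤ ∫ y, ((f y - y) ^ 2 - l * ((f y - y) * (f y + y))) ∂μ := by
      refine integral_mono_ae (hisq.const_mul _) (hiA.sub (hiB.const_mul l)) ?_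
      filter_upwards with y
      have key : d * ((f y - y) ^ 2 - l * ((f y - y) * (f y + y))) + l ^ 2 * y ^ 2
          = (d * f y - y) ^ 2 := by rw [hddef]; ring
      have h4 : -(l ^ 2 / d) * y ^ 2 = (-(l ^ 2 * y ^ 2)) / d := by ring
      rw [h4, div_le_iff₀ hd0]
      nlinarith [sq_nonneg (d * f y - y), key]
    have hlhs : ∫ y, (-(l ^ 2 / d) * y ^ 2) ∂μ = -(l ^ 2 / d) * (1 / 3) := by
      rw [integral_const_mul, hsq13]
    have hsub : ∫ y, ((f y - y) ^ 2 - l * ((f y - y) * (f y + y))) ∂μ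
        = A - l * B := by
      rw [hAdef, hBdef, integral_sub hiA (hiB.const_mul l), integral_const_mul]
    rw [hlhs, hsub] at hmono
    -- -(l^2/d)*(1/3) > -l^2/3 since d > 1, l ≠ 0
    have hstrict : -(l ^ 2) / 3 < -(l ^ 2 / d) * (1 / 3) := by
      have hll : 0 < l ^ 2 := by nlinarith [hl0]
      have : l ^ 2 / d < l ^ 2 := div_lt_self hll hd1
      linarith
    have : -(l ^ 2) / 3 < A - l * B := lt_of_lt_of_le hstrict hmono
    rw [hldef] at this
    nlinarith only [this]
  · have hApos : 0 < A := by
      rw [hAdef, integral_pos_iff_support_of_nonneg_ae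
        (Filter.Eventually.of_forall fun y => sq_nonneg (f y - y)) hiA]
      by_contra hcon
      have hz : μ (Function.support fun y => (f y - y) ^ 2) = 0 := by
        by_contra hz'
        exact hcon (lt_of_le_of_ne (zero_le) (Ne.symm hz'))
      apply hne
      have : ∀ᵐ y ∂μ, (f y - y) ^ 2 = 0 := by
        rw [ae_iff]
        exact hz
      filter_upwards [this] with y hy
      have := pow_eq_zero_iff (n := 2) (by norm_num) |>.mp hy
      simpa [sub_eq_zero] using this
    rw [hBzero]
    norm_num
    exact hApos
  · -- case 0 < B
    set l := 3 * B / 2 with hldef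
    have hl0 : 0 < l := by rw [hldef]; linarith
    have hl1 : l < 1 := by rw [hldef]; linarith
    set d := 1 - l with hddef
    clear_value l d
    have hd0 : 0 < d := by rw [hddef]; linarith
    have hd1 : d < 1 := by rw [hddef]; linarith
    -- abbreviation for the shifted integrand
    set ψ : ℝ → ℝ := fun y => (f y - y) ^ 2 - l * ((f y - y) * (f y + y)) with hψdef
    have hiψ : Integrable ψ μ := hiA.sub (hiB.const_mul l)
    have hψAB : ∫ y, ψ y ∂μ = A - l * B := by
      rw [hψdef, hAdef, hBdef, integral_sub hiA (hiB.const_mul l), integral_const_mul]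
    clear_value ψ
    -- split the integral at d
    have hiψOn : IntegrableOn ψ (Set.Ioo (0 : ℝ) 1) volume := by
      rw [IntegrableOn, ← hμdef]; exact hiψ
    have hunion : Set.Ioo (0 : ℝ) 1 = Set.Ioo 0 d ∪ Set.Ico d 1 :=
      (Set.Ioo_union_Ico_eq_Ioo hd0 hd1.le).symm
    have hdisj : Disjoint (Set.Ioo (0 : ℝ) d) (Set.Ico d 1) := by
      rw [Set.disjoint_left]
      rintro y ⟨_, hy2⟩ ⟨hy3, _⟩
      exact absurd hy3 (not_le.mpr hy2)
    have hsub1 : Set.Ioo (0 : ℝ) d ⊆ Set.Ioo 0 1 := by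
      rw [hunion]; exact Set.subset_union_left
    have hsub2 : Set.Ico (d : ℝ) 1 ⊆ Set.Ioo 0 1 := by
      rw [hunion]; exact Set.subset_union_right
    have hsplit : ∫ y, ψ y ∂μ
        = (∫ y in Set.Ioo (0 : ℝ) d, ψ y) + ∫ y in Set.Ico (d : ℝ) 1, ψ y := by
      rw [hμdef, hunion]
      exact setIntegral_union hdisj measurableSet_Ico (hiψOn.mono_set hsub1)
        (hiψOn.mono_set hsub2)
    -- first piece: ψ ≥ -(l^2/d) y^2 pointwise (pure algebra)
    have hisqOn : IntegrableOn (fun y : ℝ => y ^ 2) (Set.Ioo (0 : ℝ) 1) volume := by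
      rw [IntegrableOn, ← hμdef]; exact hisq
    have hbound1 : ∫ y in Set.Ioo (0 : ℝ) d, (-(l ^ 2 / d) * y ^ 2)
        ≤ ∫ y in Set.Ioo (0 : ℝ) d, ψ y := by
      refine integral_mono_ae ((hisqOn.mono_set hsub1).const_mul _)
        (hiψOn.mono_set hsub1) ?_
      filter_upwards with y
      have key : d * ψ y + l ^ 2 * y ^ 2 = (d * f y - y) ^ 2 := by
        simp only [hψdef]; rw [hddef]; ring
      have h4 : -(l ^ 2 / d) * y ^ 2 = (-(l ^ 2 * y ^ 2)) / d := by ring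
      rw [h4, div_le_iff₀ hd0]
      nlinarith [sq_nonneg (d * f y - y), key]
    have hc1 : ∫ y in Set.Ioo (0 : ℝ) d, (-(l ^ 2 / d) * y ^ 2)
        = -(l ^ 2 * d ^ 2) / 3 := by
      rw [integral_const_mul, ← integral_Ioc_eq_integral_Ioo,
        ← intervalIntegral.integral_of_le hd0.le, integral_pow]
      field_simp
      ring
    -- second piece: strict bound, using |f| < 1 a.e.
    set P : ℝ → ℝ := fun y => (1 - l) - 2 * y + (1 + l) * y ^ 2 with hPdef
    have hPcont : Continuous P := by
      rw [hPdef]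
      exact ((continuous_const.sub (continuous_const.mul continuous_id)).add
        (continuous_const.mul (continuous_pow 2)))
    have hiPOn : IntegrableOn P (Set.Ico (d : ℝ) 1) volume :=
      (hPcont.continuousOn.integrableOn_compact isCompact_Icc).mono_set
        Set.Ico_subset_Icc_self
    haveI hfinν : IsFiniteMeasure (volume.restrict (Set.Ico (d : ℝ) 1)) := by
      constructor
      rw [Measure.restrict_apply_univ, Real.volume_Ico]
      exact ENNReal.ofReal_lt_top
    have hbdν : ∀ᵐ y ∂(volume.restrict (Set.Ico (d : ℝ) 1)), |f y| < 1 := by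
      rw [hμdef] at hbd
      exact ae_restrict_of_ae_restrict_of_subset hsub2 hbd
    have hmemν : ∀ᵐ y ∂(volume.restrict (Set.Ico (d : ℝ) 1)), y ∈ Set.Ico d 1 :=
      ae_restrict_mem measurableSet_Ico
    have hbound2 : ∫ y in Set.Ico (d : ℝ) 1, P y < ∫ y in Set.Ico (d : ℝ) 1, ψ y := by
      have hposint : 0 < ∫ y in Set.Ico (d : ℝ) 1, (ψ y - P y) := by
        refine aux_integral_pos ?_ _ ((hiψOn.mono_set hsub2).sub hiPOn) ?_
        · rw [Measure.restrict_apply_univ, Real.volume_Ico]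
          simp only [ne_eq, ENNReal.ofReal_eq_zero, not_le]
          linarith
        · filter_upwards [hbdν, hmemν] with y hy hym
          obtain ⟨h1, h2⟩ := abs_lt.mp hy
          have hfac : ψ y - P y = (1 - f y) * (2 * y - d * (f y + 1)) := by
            rw [hψdef, hPdef, hddef]; ring
          rw [hfac]
          have hA1 : 0 < 1 - f y := by linarith
          have hA2 : 0 < 2 * y - d * (f y + 1) := by
            nlinarith [hym.1, mul_pos hd0 hA1]
          exact mul_pos hA1 hA2
      have := integral_sub (hiψOn.mono_set hsub2) hiPOn
      rw [this] at hposint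
      linarith
    have hc2 : ∫ y in Set.Ico (d : ℝ) 1, P y
        = (1 - l) * (1 - d) - (1 - d ^ 2) + (1 + l) * (1 - d ^ 3) / 3 := by
      rw [integral_Ico_eq_integral_Ioo, ← integral_Ioc_eq_integral_Ioo,
        ← intervalIntegral.integral_of_le hd1.le]
      have hder : ∀ x ∈ Set.uIcc (d : ℝ) 1,
          HasDerivAt (fun x : ℝ => (1 - l) * x - x ^ 2 + (1 + l) * x ^ 3 / 3) (P x) x := by
        intro x _
        have h1 : HasDerivAt (fun x : ℝ => (1 - l) * x) (1 - l) x := by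
          simpa using (hasDerivAt_id x).const_mul (1 - l)
        have h2 : HasDerivAt (fun x : ℝ => x ^ 2) (2 * x) x := by
          simpa using hasDerivAt_pow 2 x
        have h3 : HasDerivAt (fun x : ℝ => (1 + l) * x ^ 3 / 3) ((1 + l) * x ^ 2) x := by
          have h := ((hasDerivAt_pow 3 x).const_mul (1 + l)).div_const 3
          refine h.congr_deriv ?_
          push_cast
          ring
        exact (h1.sub h2).add h3
      rw [intervalIntegral.integral_eq_sub_of_hasDerivAt hder
        (hPcont.intervalIntegrable _ _)]
      ring
    -- assemble
    have hmain : A - l * B > -(l ^ 2) / 3 := by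
      have hineq : A - l * B
          > -(l ^ 2 * d ^ 2) / 3
            + ((1 - l) * (1 - d) - (1 - d ^ 2) + (1 + l) * (1 - d ^ 3) / 3) := by
        rw [← hψAB, hsplit, ← hc1, ← hc2]
        exact add_lt_add_of_le_of_lt hbound1 hbound2
      have hval : -(l ^ 2 * d ^ 2) / 3
          + ((1 - l) * (1 - d) - (1 - d ^ 2) + (1 + l) * (1 - d ^ 3) / 3)
          = -(l ^ 2) / 3 := by
        rw [hddef]; ring
      linarith only [hineq, hval.ge]
    rw [hldef] at hmain
    nlinarith only [hmain]
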